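/- Let X be a set and K a collection of subsets of X. For A ⊆ X, let U_A := (Aᶜ ×ˢ X) ∪ (X ×ˢ A) = {(x, y) ∈ X × X : x ∈ A → y ∈ A}, and let 𝒰 be the filter on X × X generated by {U_A : A ∈ K}. Then for any B ⊆ X: U_B ∈ 𝒰 if and only if B belongs to the bounded sublattice of the powerset of X generated by K, i.e., the smallest collection of subsets of X containing K, ∅ and X and closed under finite unions and finite intersections. -/

import Mathlib

/-- The Pervin entourage `U_A = (Aᶜ × X) ∪ (X × A) = {(x, y) : x ∈ A → y ∈ A}`. -/
def pervinEntourage {X : Type*} (A : Set X) : Set (X × X) :=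
  {p : X × X | p.1 ∈ A → p.2 ∈ A}

/-- The bounded sublattice of the powerset of `X` generated by `K`: the smallest family
containing `K`, `∅` and `X`, closed under finite unions and intersections. -/
def boundedLatticeGen {X : Type*} (K : Set (Set X)) : Set (Set X) :=
  ⋂₀ {F : Set (Set X) | K ⊆ F ∧ ∅ ∈ F ∧ Set.univ ∈ F ∧
      (∀ A ∈ F, ∀ B ∈ F, A ∪ B ∈ F) ∧ (∀ A ∈ F, ∀ B ∈ F, A ∩ B ∈ F)}

section Lat

variable {X : Type*} {K : Set (Set X)}

lemma lat_gen {A : Set X} (h : A ∈ K) : A ∈ boundedLatticeGen K :=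
  fun _F hF => hF.1 h

lemma lat_empty : (∅ : Set X) ∈ boundedLatticeGen K :=
  fun _F hF => hF.2.1

lemma lat_univ : (Set.univ : Set X) ∈ boundedLatticeGen K :=
  fun _F hF => hF.2.2.1

lemma lat_union {A B : Set X} (hA : A ∈ boundedLatticeGen K)
    (hB : B ∈ boundedLatticeGen K) : A ∪ B ∈ boundedLatticeGen K :=
  fun F hF => hF.2.2.2.1 A (hA F hF) B (hB F hF)

lemma lat_inter {A B : Set X} (hA : A ∈ boundedLatticeGen K)
    (hB : B ∈ boundedLatticeGen K) : A ∩ B ∈ boundedLatticeGen K :=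
  fun F hF => hF.2.2.2.2 A (hA F hF) B (hB F hF)

lemma lat_sInter {T : Set (Set X)} (hT : T.Finite) :
    T ⊆ boundedLatticeGen K → ⋂₀ T ∈ boundedLatticeGen K := by
  refine Set.Finite.induction_on
    (motive := fun T _ => T ⊆ boundedLatticeGen K → ⋂₀ T ∈ boundedLatticeGen K) T hT
    (fun _ => ?_) ?_
  · simpa using (lat_univ : (Set.univ : Set X) ∈ boundedLatticeGen K)
  · intro A T _ _ ih hsub
    rw [Set.sInter_insert]
    exact lat_inter (hsub (Set.mem_insert _ _))
      (ih fun C hC => hsub (Set.mem_insert_of_mem _ hC))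

lemma lat_sUnion {T : Set (Set X)} (hT : T.Finite) :
    T ⊆ boundedLatticeGen K → ⋃₀ T ∈ boundedLatticeGen K := by
  refine Set.Finite.induction_on
    (motive := fun T _ => T ⊆ boundedLatticeGen K → ⋃₀ T ∈ boundedLatticeGen K) T hT
    (fun _ => ?_) ?_
  · simpa using (lat_empty : (∅ : Set X) ∈ boundedLatticeGen K)
  · intro A T _ _ ih hsub
    rw [Set.sUnion_insert]
    exact lat_union (hsub (Set.mem_insert _ _))
      (ih fun C hC => hsub (Set.mem_insert_of_mem _ hC))

end Lat

/-- The blocks of the Pervin quasi-uniform space `(X, 𝒰_K)` are exactly the members of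
the bounded sublattice of `𝒫(X)` generated by `K`. -/
theorem pervin_blocks (X : Type*) (K : Set (Set X)) (B : Set X) :
    pervinEntourage B ∈ Filter.generate (pervinEntourage '' K) ↔
      B ∈ boundedLatticeGen K := by
  constructor
  · intro h
    rw [Filter.mem_generate_iff] at h
    obtain ⟨t, hts, htf, hsub⟩ := h
    have hch : ∀ U ∈ t, ∃ A ∈ K, pervinEntourage A = U := fun U hU => hts hU
    choose! A hAK hAe using hch
    set s : Set (Set X) := A '' t with hs
    have hsf : s.Finite := htf.image _
    have hsK : s ⊆ K := by
      rintro C ⟨U, hU, rfl⟩; exact hAK U hU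
    have H : ∀ x y : X, (∀ C ∈ s, x ∈ C → y ∈ C) → x ∈ B → y ∈ B := by
      intro x y hxy
      have : (x, y) ∈ ⋂₀ t := by
        intro U hU
        rw [← hAe U hU]
        exact hxy _ ⟨U, hU, rfl⟩
      exact hsub this
    by_cases hB : B = ∅
    · rw [hB]; exact lat_empty
    -- the family of "traces"
    set 𝒯 : Set (Set (Set X)) := (fun x => {C | C ∈ s ∧ x ∈ C}) '' B with h𝒯
    have h𝒯sub : 𝒯 ⊆ 𝒫 s := by
      rintro T ⟨x, _, rfl⟩; exact fun C hC => hC.1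
    have h𝒯f : 𝒯.Finite := hsf.powerset.subset h𝒯sub
    have hBeq : B = ⋃₀ (Set.sInter '' 𝒯) := by
      ext y
      constructor
      · intro hy
        exact ⟨⋂₀ {C | C ∈ s ∧ y ∈ C}, ⟨_, ⟨y, hy, rfl⟩, rfl⟩,
          fun C hC => hC.2⟩
      · rintro ⟨_, ⟨T, ⟨x, hxB, rfl⟩, rfl⟩, hy⟩
        exact H x y (fun C hC hxC => hy C ⟨hC, hxC⟩) hxB
    rw [hBeq]
    apply lat_sUnion (h𝒯f.image _)
    rintro _ ⟨T, hT, rfl⟩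
    exact lat_sInter (hsf.subset (h𝒯sub hT)) fun C hC => lat_gen (hsK (h𝒯sub hT hC))
  · intro h
    refine h {C | pervinEntourage C ∈ Filter.generate (pervinEntourage '' K)} ⟨?_, ?_, ?_, ?_, ?_⟩ <;> try
      simp only [Set.mem_setOf_eq]
    · intro A hA
      exact Filter.GenerateSets.basic ⟨A, hA, rfl⟩
    · have : pervinEntourage (∅ : Set X) = Set.univ := by
        ext p; simp [pervinEntourage]
      rw [this]; exact Filter.univ_mem
    · have : pervinEntourage (Set.univ : Set X) = Set.univ := by
        ext p; simp [pervinEntourage]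
      rw [this]; exact Filter.univ_mem
    · intro C hC D hD
      refine Filter.mem_of_superset (Filter.inter_mem hC hD) ?_
      rintro ⟨x, y⟩ ⟨h1, h2⟩ hx
      rcases hx with hx | hx
      · exact Or.inl (h1 hx)
      · exact Or.inr (h2 hx)
    · intro C hC D hD
      refine Filter.mem_of_superset (Filter.inter_mem hC hD) ?_
      rintro ⟨x, y⟩ ⟨h1, h2⟩ hx
      exact ⟨h1 hx.1, h2 hx.2⟩
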